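/- Let q be a prime power and t a prime, t ≥ 2. Let P = ⟨v⟩ be a point of PG(t−1, q^t) (over the field F_{q^t}) with v = (α₁, …, α_t) where α₁, …, α_t ∈ F_{q^t} are linearly independent over F_q (P is an 'imaginary point'), and let σ : x ↦ x^q act coordinatewise giving points P^{σ^i}. Let Q₁, Q₂ be two distinct points with all coordinates in F_q. Then no t of the t+2 points Q₁, Q₂, P, P^σ, …, P^{σ^{t−1}} lie in a common hyperplane of PG(t−1, q^t); equivalently, every t-subset of {Q₁, Q₂, P, P^σ, …, P^{σ^{t−1}}} is projectively independent. -/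

import Mathlib

open Finset
open Fin.NatCast

/-- If `u` is coprime-ish to `t` (0 < u < t, t prime), there are naturals `a b` with
`u * a = t * b + 1`. -/
lemma aux_exists_inv (t u : ℕ) (ht : 2 ≤ t) (htp : Nat.Prime t) (hu0 : 0 < u) (hut : u < t) :
    ∃ a b : ℕ, u * a = t * b + 1 := by
  haveI : Fact (Nat.Prime t) := ⟨htp⟩
  have hu : (u : ZMod t) ≠ 0 := by
    rw [Ne, ZMod.natCast_eq_zero_iff]
    intro hdvd
    exact absurd (Nat.le_of_dvd hu0 hdvd) (by omega)
  set a := ((u : ZMod t)⁻¹).val with ha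
  have h1 : ((u * a : ℕ) : ZMod t) = 1 := by
    push_cast
    rw [ha, ZMod.natCast_rightInverse _]
    exact mul_inv_cancel₀ hu
  have h2 : (u * a) % t = 1 % t := by
    have h := (ZMod.natCast_eq_natCast_iff (u * a) 1 t).mp (by rw [h1]; norm_num)
    exact h
  have h3 : (u * a) % t = 1 := by rw [h2, Nat.mod_eq_of_lt (by omega)]
  refine ⟨a, (u * a) / t, ?_⟩
  have := Nat.div_add_mod (u * a) t
  omega

/-- The `q`-power Frobenius as a ring hom, when `q` is a prime power equal to the
cardinality of a subfield `F` of `K`. -/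
lemma aux_sigma (q : ℕ) (hq : IsPrimePow q) (F K : Type*) [Field F] [Field K] [Algebra F K]
    [Fintype F] (hF : Fintype.card F = q) :
    ∃ σ : K →+* K, ∀ x, σ x = x ^ q := by
  obtain ⟨p, e, hp, he, rfl⟩ := hq
  have hp' : Nat.Prime p := hp.nat_prime
  obtain ⟨r, hr⟩ := CharP.exists F
  haveI := hr
  obtain ⟨n, hrp, hcard⟩ := FiniteField.card F r
  have hrpow : r ^ (n : ℕ) = p ^ e := by rw [← hcard, hF]
  have hrdvd : r ∣ p ^ e := hrpow ▸ dvd_pow_self r n.2.ne'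
  have hrpeq : r = p := (Nat.prime_dvd_prime_iff_eq hrp hp').mp (hrp.dvd_of_dvd_pow hrdvd)
  subst hrpeq
  haveI : CharP K r := charP_of_injective_algebraMap (algebraMap F K).injective r
  haveI : Fact (Nat.Prime r) := ⟨hrp⟩
  haveI : ExpChar K r := ExpChar.prime hrp
  exact ⟨iterateFrobenius K r e, fun x => iterateFrobenius_def ..⟩

theorem stmt14 (q t : ℕ) (hq : IsPrimePow q) (htp : Nat.Prime t) (ht : 2 ≤ t)
    (F K : Type*) [Field F] [Field K] [Algebra F K] [Fintype F] [Fintype K]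
    (hF : Fintype.card F = q) (hK : Fintype.card K = q ^ t)
    (α : Fin t → K) (hα : LinearIndependent F α)
    (b₁ b₂ : Fin t → F) (hb₁ : b₁ ≠ 0) (hb₂ : b₂ ≠ 0)
    (hdist : Submodule.span K {(fun j => algebraMap F K (b₁ j) : Fin t → K)} ≠
      Submodule.span K {(fun j => algebraMap F K (b₂ j) : Fin t → K)})
    (v : Fin (t + 2) → Fin t → K)
    (hv : v = Fin.cons (fun j => algebraMap F K (b₁ j))
      (Fin.cons (fun j => algebraMap F K (b₂ j))
        (fun (i : Fin t) (j : Fin t) => α j ^ q ^ (i : ℕ)))) :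
    ∀ s : Finset (Fin (t + 2)), s.card = t →
      LinearIndependent K (fun i : {x // x ∈ s} => v i.val) := by
  classical
  haveI : NeZero t := ⟨by omega⟩
  haveI : Nonempty (Fin t) := ⟨⟨0, by omega⟩⟩
  have hq2 : 2 ≤ q := hq.two_le
  obtain ⟨σ, hσ⟩ := aux_sigma q hq F K hF
  have halg : Function.Injective (algebraMap F K) := (algebraMap F K).injective
  have hqt : ∀ x : K, x ^ q ^ t = x := fun x => by
    conv_rhs => rw [← FiniteField.pow_card x]
    rw [hK]
  have hfixF : ∀ b : F, (algebraMap F K b) ^ q = algebraMap F K b := fun b => by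
    rw [← map_pow, ← hF, FiniteField.pow_card]
  have hpowadd : ∀ (m n : ℕ) (x : K), x ^ q ^ (m + n) = (x ^ q ^ n) ^ q ^ m := by
    intro m n x
    rw [← pow_mul, ← pow_add, Nat.add_comm]
  have hmod : ∀ (x : K) (n : ℕ), x ^ q ^ n = x ^ q ^ (n % t) := by
    intro x n
    induction n using Nat.strong_induction_on with
    | _ n ih =>
      by_cases h : n < t
      · rw [Nat.mod_eq_of_lt h]
      · have h1 : n = (n - t) + t := by omega
        have e1 : x ^ q ^ n = x ^ q ^ ((n - t) + t) := by rw [← h1]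
        rw [e1, hpowadd, hqt, ih (n - t) (by omega),
          Nat.mod_eq_sub_mod (show t ≤ n by omega)]
  have hfixpow : ∀ (x : K), x ^ q = x → ∀ m : ℕ, x ^ q ^ m = x := by
    intro x hx m
    induction m with
    | zero => simp
    | succ m ih => rw [pow_succ, pow_mul, ih, hx]
  set P : Fin t → Fin t → K := fun i j => α j ^ q ^ (i : ℕ) with hPdef
  have hval_add_one : ∀ i : Fin t, ((i + 1 : Fin t) : ℕ) = ((i : ℕ) + 1) % t := by
    intro i
    rw [Fin.val_add, Fin.val_one', Nat.mod_eq_of_lt (show 1 < t by omega)]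
  have hσP : ∀ (i : Fin t) (j : Fin t), (P i j) ^ q = P (i + 1) j := by
    intro i j
    show (α j ^ q ^ (i : ℕ)) ^ q = α j ^ q ^ ((i + 1 : Fin t) : ℕ)
    rw [← pow_mul, ← pow_succ, hval_add_one, ← hmod]
  -- dimension facts
  have hfinF : Module.finrank F K = t := by
    have hc := Module.card_eq_pow_finrank (K := F) (V := K)
    rw [hF, hK] at hc
    exact (Nat.pow_right_injective hq2 hc.symm)
  have hspanα : Submodule.span F (Set.range α) = ⊤ :=
    hα.span_eq_top_of_card_eq_finrank (by rw [Fintype.card_fin, hfinF])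
  -- additivity of x ↦ x ^ q ^ m
  have hadd : ∀ (m : ℕ) (x y : K), (x + y) ^ q ^ m = x ^ q ^ m + y ^ q ^ m := by
    intro m
    induction m with
    | zero => intro x y; simp
    | succ m ih =>
      intro x y
      rw [pow_succ, pow_mul, pow_mul, pow_mul, ih, ← hσ, ← hσ, ← hσ, ← map_add]
  have hfixpowF : ∀ (m : ℕ) (a : F), (algebraMap F K a) ^ q ^ m = algebraMap F K a :=
    fun m a => hfixpow _ (hfixF a) m
  -- Moore matrix rows are linearly independent
  have hgen : ∀ a b : ℕ, a < b → b < t → ¬(∀ x : K, x ^ q ^ a = x ^ q ^ b) := by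
    intro a b hab hbt hall
    obtain ⟨g, hg⟩ := IsCyclic.exists_generator (α := Kˣ)
    have horder : orderOf g = q ^ t - 1 := by
      rw [orderOf_eq_card_of_forall_mem_zpowers hg, Nat.card_units K,
        Nat.card_eq_fintype_card, hK]
    have hgu : g ^ q ^ a = g ^ q ^ b := Units.ext (by
      rw [Units.val_pow_eq_pow_val, Units.val_pow_eq_pow_val]; exact hall g)
    have hme := pow_eq_pow_iff_modEq.mp hgu
    rw [horder] at hme
    have hab' : q ^ a < q ^ b := Nat.pow_lt_pow_right (by omega) hab
    have hb' : q ^ b ≤ q ^ (t - 1) := Nat.pow_le_pow_right (by omega) (by omega)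
    have ht1 : 2 ≤ q ^ (t - 1) := by
      calc 2 ≤ q := hq2
      _ = q ^ 1 := (pow_one q).symm
      _ ≤ q ^ (t - 1) := Nat.pow_le_pow_right (by omega) (by omega)
    have hqq : q ^ (t - 1) * q = q ^ t := by
      rw [← pow_succ]; congr 1; omega
    have h2q : q ^ (t - 1) * 2 ≤ q ^ (t - 1) * q := Nat.mul_le_mul_left _ hq2
    have hlt : q ^ b < q ^ t - 1 := by omega
    rw [Nat.ModEq, Nat.mod_eq_of_lt (by omega), Nat.mod_eq_of_lt hlt] at hme
    omega
  have hPli : LinearIndependent K P := by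
    rw [Fintype.linearIndependent_iff]
    intro c hc
    have hcj : ∀ j : Fin t, ∑ i : Fin t, c i * α j ^ q ^ (i : ℕ) = 0 := by
      intro j
      have h := congrFun hc j
      simpa [Finset.sum_apply, Pi.smul_apply, smul_eq_mul] using h
    let L : K →ₗ[F] K :=
      { toFun := fun x => ∑ i : Fin t, c i * x ^ q ^ (i : ℕ)
        map_add' := by
          intro x y
          simp only [hadd, mul_add]
          rw [Finset.sum_add_distrib]
        map_smul' := by
          intro a x
          simp only [Algebra.smul_def, mul_pow, hfixpowF, RingHom.id_apply]
          rw [Finset.mul_sum]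
          exact Finset.sum_congr rfl fun i _ => by ring }
    have hL : L = 0 := by
      apply LinearMap.ext_on hspanα
      rintro x ⟨j, rfl⟩
      exact hcj j
    have hLx : ∀ x : K, ∑ i : Fin t, c i * x ^ q ^ (i : ℕ) = 0 := by
      intro x
      have := LinearMap.congr_fun hL x
      exact this
    set φ : Fin t → (K →* K) := fun i => powMonoidHom (q ^ (i : ℕ)) with hφ
    have hinj : Function.Injective φ := by
      intro i j hij
      have hij' : ∀ x : K, x ^ q ^ (i : ℕ) = x ^ q ^ (j : ℕ) := fun x => by
        have := congrFun (congrArg (fun f : K →* K => (f : K → K)) hij) x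
        simpa [hφ, powMonoidHom] using this
      rcases lt_trichotomy (i : ℕ) (j : ℕ) with h | h | h
      · exact absurd hij' (hgen _ _ h j.is_lt)
      · exact Fin.ext h
      · exact absurd (fun x => (hij' x).symm) (hgen _ _ h i.is_lt)
    have hliφ := (linearIndependent_monoidHom K K).comp φ hinj
    have hsum0 : ∑ i : Fin t, c i • ((fun f : K →* K => (f : K → K)) ∘ φ) i = 0 := by
      funext x
      simp only [Finset.sum_apply, Pi.smul_apply, Function.comp_apply, hφ, powMonoidHom,
        OneHom.coe_mk, MonoidHom.coe_mk, smul_eq_mul, Pi.zero_apply]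
      exact hLx x
    exact fun i => Fintype.linearIndependent_iff.mp hliφ c hsum0 i
  have hPli' := Fintype.linearIndependent_iff.mp hPli
  -- basis from the Moore rows
  have hcardfin : Fintype.card (Fin t) = Module.finrank K (Fin t → K) := by
    rw [Fintype.card_fin, Module.finrank_fin_fun]
  let B : Module.Basis (Fin t) K (Fin t → K) := basisOfLinearIndependentOfCardEqFinrank hPli hcardfin
  have hB : ⇑B = P := coe_basisOfLinearIndependentOfCardEqFinrank hPli hcardfin
  have hrepr : ∀ x : Fin t → K, ∑ i : Fin t, B.repr x i • P i = x := by
    intro x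
    have h := B.sum_repr x
    rwa [hB] at h
  -- shift property of coordinates of Frobenius-fixed vectors
  have hshift : ∀ x : Fin t → K, (∀ j, (x j) ^ q = x j) →
      ∀ i, B.repr x (i + 1) = (B.repr x i) ^ q := by
    intro x hx
    have h1 : ∑ i : Fin t, B.repr x i • P i = x := hrepr x
    have h2 : ∑ i : Fin t, ((B.repr x i) ^ q) • P (i + 1) = x := by
      funext j
      have hLHS : (∑ i : Fin t, ((B.repr x i) ^ q) • P (i + 1)) j
          = ∑ i : Fin t, (B.repr x i * P i j) ^ q := by
        rw [Finset.sum_apply]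
        exact Finset.sum_congr rfl fun i _ => by
          rw [Pi.smul_apply, smul_eq_mul, mul_pow, hσP]
      rw [hLHS]
      have hsum : ∑ i : Fin t, (B.repr x i * P i j) ^ q
          = (∑ i : Fin t, B.repr x i * P i j) ^ q := by
        simp only [← hσ, ← map_sum]
      rw [hsum]
      have h1j : ∑ i : Fin t, B.repr x i * P i j = x j := by
        have := congrFun h1 j
        simpa [Finset.sum_apply, Pi.smul_apply, smul_eq_mul] using this
      rw [h1j, hx j]
    have h3 : ∑ i : Fin t, ((B.repr x (i - 1)) ^ q) • P i = x := by
      have he := Equiv.sum_comp (Equiv.addRight (1 : Fin t))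
        (fun i => ((B.repr x (i - 1)) ^ q) • P i)
      simp only [Equiv.coe_addRight, add_sub_cancel_right] at he
      rw [← he]
      exact h2
    have h4 : ∑ i : Fin t, (B.repr x i - (B.repr x (i - 1)) ^ q) • P i = 0 := by
      simp only [sub_smul]
      rw [Finset.sum_sub_distrib, h1, h3, sub_self]
    intro i
    have h6 := hPli' _ h4 (i + 1)
    rw [add_sub_cancel_right] at h6
    exact sub_eq_zero.mp h6
  -- iteration of the shift property
  have hiter : ∀ (w : Fin t → K), (∀ i, w (i + 1) = w i ^ q) →
      ∀ (i : Fin t) (m : ℕ), w (i + (m : Fin t)) = w i ^ q ^ m := by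
    intro w hw i m
    induction m with
    | zero => simp
    | succ m ih =>
      have hcast : ((m + 1 : ℕ) : Fin t) = (m : Fin t) + 1 := by
        rw [Nat.cast_add, Nat.cast_one]
      rw [hcast, ← add_assoc, hw, ih, ← pow_mul, ← pow_succ]
  -- coordinates of a nonzero Frobenius-fixed vector are all nonzero
  have hall : ∀ x : Fin t → K, (∀ j, (x j) ^ q = x j) → x ≠ 0 →
      ∀ i, B.repr x i ≠ 0 := by
    intro x hx hx0 i hi0
    have hzero : ∀ k : Fin t, B.repr x k = 0 := by
      intro k
      have h1 := hiter (fun i => B.repr x i) (hshift x hx) i ((k - i).val)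
      rw [Fin.cast_val_eq_self, add_comm, sub_add_cancel] at h1
      rw [h1, hi0, zero_pow (by positivity)]
    have hx0' : B.repr x = 0 := by
      ext k
      exact hzero k
    exact hx0 ((LinearEquiv.map_eq_zero_iff B.repr).mp hx0')
  -- main argument
  intro s hs
  rw [Fintype.linearIndependent_iff]
  intro g hg
  set c : Fin (t + 2) → K := fun i => if h : i ∈ s then g ⟨i, h⟩ else 0 with hcdef
  have hsum : ∑ i : Fin (t + 2), c i • v i = 0 := by
    have h1 : ∑ i ∈ s, c i • v i = ∑ i : Fin (t + 2), c i • v i :=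
      Finset.sum_subset (Finset.subset_univ s) (fun i _ hi => by
        simp [hcdef, dif_neg hi])
    have h2 : ∑ i : {x // x ∈ s}, c i.val • v i.val = ∑ i ∈ s, c i • v i :=
      Finset.sum_coe_sort s (fun i => c i • v i)
    rw [← h1, ← h2]
    rw [← hg]
    exact Finset.sum_congr rfl fun i _ => by rw [hcdef]; simp [dif_pos i.2]
  have hcompl : 1 < sᶜ.card := by
    rw [Finset.card_compl, Fintype.card_fin, hs]; omega
  obtain ⟨m₁, hm₁, m₂, hm₂, hmne⟩ := Finset.one_lt_card.mp hcompl
  have hcm₁ : c m₁ = 0 := dif_neg (Finset.mem_compl.mp hm₁)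
  have hcm₂ : c m₂ = 0 := dif_neg (Finset.mem_compl.mp hm₂)
  -- named vectors
  set Q₁ : Fin t → K := fun j => algebraMap F K (b₁ j) with hQ₁def
  set Q₂ : Fin t → K := fun j => algebraMap F K (b₂ j) with hQ₂def
  have hQ₁0 : Q₁ ≠ 0 := by
    intro h
    exact hb₁ (funext fun j => halg (by
      have := congrFun h j
      simpa [hQ₁def] using this))
  have hQ₂0 : Q₂ ≠ 0 := by
    intro h
    exact hb₂ (funext fun j => halg (by
      have := congrFun h j
      simpa [hQ₂def] using this))
  have hQfix₁ : ∀ j, (Q₁ j) ^ q = Q₁ j := fun j => hfixF _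
  have hQfix₂ : ∀ j, (Q₂ j) ^ q = Q₂ j := fun j => hfixF _
  set d : Fin t → K := fun i => B.repr Q₁ i with hddef
  set e : Fin t → K := fun i => B.repr Q₂ i with hedef
  have hd : ∀ i, d i ≠ 0 := fun i => hall Q₁ hQfix₁ hQ₁0 i
  have he : ∀ i, e i ≠ 0 := fun i => hall Q₂ hQfix₂ hQ₂0 i
  have hdrec : ∀ i, d (i + 1) = d i ^ q := fun i => hshift Q₁ hQfix₁ i
  have herec : ∀ i, e (i + 1) = e i ^ q := fun i => hshift Q₂ hQfix₂ i
  -- decompose the sum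
  have hv0 : v 0 = Q₁ := by rw [hv, Fin.cons_zero]
  have hv1 : v 1 = Q₂ := by
    rw [hv, ← Fin.succ_zero_eq_one, Fin.cons_succ, Fin.cons_zero]
  have hvs : ∀ i : Fin t, v i.succ.succ = P i := fun i => by
    rw [hv, Fin.cons_succ, Fin.cons_succ]
  set γ : Fin t → K := fun i => c i.succ.succ with hγdef
  have hsum2 : c 0 • Q₁ + c 1 • Q₂ + ∑ i : Fin t, γ i • P i = 0 := by
    rw [Fin.sum_univ_succ, Fin.sum_univ_succ] at hsum
    simp only [Fin.succ_zero_eq_one, hv0, hv1, hvs] at hsum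
    simp only [hγdef]
    rw [← hsum]
    abel
  have hexp : ∀ i, c 0 * d i + c 1 * e i + γ i = 0 := by
    have hkey : ∑ i : Fin t, (c 0 * d i + c 1 * e i + γ i) • P i = 0 := by
      simp only [add_smul, mul_smul]
      rw [Finset.sum_add_distrib, Finset.sum_add_distrib, ← Finset.smul_sum, ← Finset.smul_sum]
      rw [hrepr Q₁, hrepr Q₂]
      exact hsum2
    exact fun i => hPli' _ hkey i
  have hdecomp : ∀ m : Fin (t + 2), m = 0 ∨ m = 1 ∨ ∃ k : Fin t, m = k.succ.succ := by
    intro m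
    induction m using Fin.cases with
    | zero => exact Or.inl rfl
    | succ j =>
      induction j using Fin.cases with
      | zero => exact Or.inr (Or.inl (by rw [Fin.succ_zero_eq_one]))
      | succ k => exact Or.inr (Or.inr ⟨k, rfl⟩)
  have hfinish : c 0 = 0 → c 1 = 0 → (∀ k, γ k = 0) → ∀ i, c i = 0 := by
    intro h0 h1 hk i
    rcases hdecomp i with rfl | rfl | ⟨k, rfl⟩
    · exact h0
    · exact h1
    · exact hk k
  have hS1 : c 0 = 0 → c 1 = 0 → ∀ i, c i = 0 := by
    intro h0 h1
    refine hfinish h0 h1 fun k => ?_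
    have h := hexp k
    rw [h0, h1] at h
    simpa using h
  have hS2 : c 0 = 0 → ∀ k, γ k = 0 → ∀ i, c i = 0 := by
    intro h0 k hk
    have h := hexp k
    rw [h0, hk] at h
    have h2 : c 1 * e k = 0 := by linear_combination h
    exact hS1 h0 ((mul_eq_zero.mp h2).resolve_right (he k))
  have hS3 : c 1 = 0 → ∀ k, γ k = 0 → ∀ i, c i = 0 := by
    intro h1 k hk
    have h := hexp k
    rw [h1, hk] at h
    have h2 : c 0 * d k = 0 := by linear_combination h
    exact hS1 ((mul_eq_zero.mp h2).resolve_right (hd k)) h1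
  have hS4 : ∀ k l : Fin t, k ≠ l → γ k = 0 → γ l = 0 → ∀ i, c i = 0 := by
    intro k l hkl hgk hgl
    by_cases h0 : c 0 = 0
    · exact hS2 h0 k hgk
    exfalso
    have hk' := hexp k; rw [hgk, add_zero] at hk'
    have hl' := hexp l; rw [hgl, add_zero] at hl'
    have hcross : d k * e l = d l * e k := by
      have h1 : c 0 * (d k * e l) = c 0 * (d l * e k) := by
        linear_combination e l * hk' - e k * hl'
      exact mul_left_cancel₀ h0 h1
    set r : Fin t → K := fun i => d i * (e i)⁻¹ with hrdef
    have hrrec : ∀ i, r (i + 1) = r i ^ q := by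
      intro i
      show d (i + 1) * (e (i + 1))⁻¹ = (d i * (e i)⁻¹) ^ q
      rw [hdrec, herec, mul_pow, inv_pow]
    have hrkl : r k = r l := by
      show d k * (e k)⁻¹ = d l * (e l)⁻¹
      rw [← div_eq_mul_inv, ← div_eq_mul_inv, div_eq_div_iff (he k) (he l)]
      linear_combination hcross
    set u : ℕ := (l - k).val with hudef
    have hlk : l - k ≠ 0 := sub_ne_zero.mpr (Ne.symm hkl)
    have hu0 : 0 < u := by
      rcases Nat.eq_zero_or_pos u with h | h
      · exfalso
        apply hlk
        rw [← Fin.cast_val_eq_self (l - k)]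
        have h' : (l - k).val = 0 := h
        rw [h', Nat.cast_zero]
      · exact h
    have hut : u < t := (l - k).is_lt
    have hx1 : r k ^ q ^ u = r k := by
      have h := hiter r hrrec k u
      rw [Fin.cast_val_eq_self, add_comm, sub_add_cancel] at h
      exact (hrkl.trans h).symm
    obtain ⟨a, b', hab⟩ := aux_exists_inv t u ht htp hu0 hut
    have hfixu : ∀ m : ℕ, r k ^ q ^ (u * m) = r k := by
      intro m
      induction m with
      | zero => simp
      | succ m ih => rw [Nat.mul_succ, hpowadd (u * m) u, hx1, ih]
    have hfixt : ∀ (x : K) (m : ℕ), x ^ q ^ (t * m) = x := by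
      intro x m
      induction m with
      | zero => simp
      | succ m ih => rw [Nat.mul_succ, hpowadd (t * m) t, hqt, ih]
    have hxq : r k ^ q = r k := by
      have h1 := hfixu a
      rw [hab, hpowadd (t * b') 1, hfixt _ b'] at h1
      simpa using h1
    have hrconst : ∀ i, r i = r k := by
      intro i
      have h := hiter r hrrec k ((i - k).val)
      rw [Fin.cast_val_eq_self, add_comm, sub_add_cancel] at h
      rw [h, hfixpow _ hxq]
    have hde : ∀ i, d i = r k * e i := by
      intro i
      have h2 : d i * (e i)⁻¹ = r k := hrconst i
      calc d i = d i * ((e i)⁻¹ * e i) := by rw [inv_mul_cancel₀ (he i), mul_one]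
      _ = d i * (e i)⁻¹ * e i := by rw [mul_assoc]
      _ = r k * e i := by rw [h2]
    have hrk0 : r k ≠ 0 := fun h => hd k (by rw [hde k, h, zero_mul])
    have hQQ : Q₁ = r k • Q₂ := by
      rw [← hrepr Q₁, ← hrepr Q₂, Finset.smul_sum]
      exact Finset.sum_congr rfl fun i _ => by
        rw [smul_smul]
        exact congrArg (fun z => z • P i) (hde i)
    exact hdist (by
      rw [hQQ]
      exact Submodule.span_singleton_smul_eq (IsUnit.mk0 _ hrk0) Q₂)
  have hzero : ∀ i, c i = 0 := by
    rcases hdecomp m₁ with h₁ | h₁ | ⟨k₁, h₁⟩ <;> rcases hdecomp m₂ with h₂ | h₂ | ⟨k₂, h₂⟩ <;>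
      subst h₁ <;> subst h₂
    · exact absurd rfl hmne
    · exact hS1 hcm₁ hcm₂
    · exact hS2 hcm₁ k₂ hcm₂
    · exact hS1 hcm₂ hcm₁
    · exact absurd rfl hmne
    · exact hS3 hcm₁ k₂ hcm₂
    · exact hS2 hcm₂ k₁ hcm₁
    · exact hS3 hcm₂ k₁ hcm₁
    · exact hS4 k₁ k₂ (fun h => hmne (by rw [h])) hcm₁ hcm₂
  intro i
  have h := hzero i.val
  simp only [hcdef] at h
  rw [dif_pos i.2] at h
  exact h
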